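/- Let k, l ∈ ℕ with k ≥ l ≥ 1 and let A ∈ Mat_{k×l}(ℤ). The following are equivalent: (1) there exists a matrix C ∈ Mat_{k×(k−l)}(ℤ) such that the k×k block matrix (A|C) is invertible over ℤ (i.e. has determinant ±1); (2) the greatest common divisor of all l×l minors of A is equal to 1. -/

import Mathlib

/-- The `k × k` block matrix `(A|C)` obtained by placing the columns of `C` to the
right of the columns of `A`. -/
def appendCols (k l : ℕ) (A : Matrix (Fin k) (Fin l) ℤ)
    (C : Matrix (Fin k) (Fin (k - l)) ℤ) : Matrix (Fin k) (Fin k) ℤ :=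
  Matrix.of fun i j =>
    if h : (j : ℕ) < l then A i ⟨j, h⟩
    else C i ⟨(j : ℕ) - l, by have := j.isLt; omega⟩

open Matrix in
lemma aux_isUnit_det_submatrix {R : Type*} [CommRing R] {ι κ : Type*} [Fintype ι] [DecidableEq ι]
    [Fintype κ] [DecidableEq κ] (M : Matrix κ κ R) (e₁ e₂ : ι ≃ κ) :
    IsUnit (M.submatrix ⇑e₁ ⇑e₂).det ↔ IsUnit M.det := by
  have h : M.submatrix ⇑e₁ ⇑e₂ = (M.submatrix ⇑e₂ ⇑e₂).submatrix ⇑(e₁.trans e₂.symm) id := by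
    ext i j; simp
  rw [h, Matrix.det_permute, Matrix.det_submatrix_equiv_self]
  rcases Int.units_eq_one_or (Equiv.Perm.sign (e₁.trans e₂.symm)) with hs | hs <;>
    simp [hs]

open Matrix in
lemma exists_minor_det_ne_zero {K : Type*} [Field K] {k l : ℕ}
    (B : Matrix (Fin k) (Fin l) K) (h : Function.Injective B.mulVec) :
    ∃ r : Fin l ↪ Fin k, (B.submatrix ⇑r id).det ≠ 0 := by
  classical
  have hrank : B.rank = l := by
    rw [Matrix.rank, LinearMap.finrank_range_of_inj (by rwa [Matrix.coe_mulVecLin])]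
    simp
  have hspan : Submodule.span K (Set.range B) = ⊤ := by
    apply Submodule.eq_top_of_finrank_eq
    change Module.finrank K (Submodule.span K (Set.range B.row)) = _
    rw [← Matrix.rank_eq_finrank_span_row, hrank]; simp
  obtain ⟨b, hb_sub, hb_span, hb_li⟩ := exists_linearIndependent K (Set.range B)
  rw [hspan] at hb_span
  haveI : Fintype b := (hb_li.setFinite).fintype
  let bb : Module.Basis b K (Fin l → K) := Module.Basis.mk hb_li (by rw [Subtype.range_coe, hb_span])
  have hcard : Fintype.card b = l := by
    have h2 := Module.finrank_eq_card_basis bb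
    simp only [Module.finrank_fin_fun] at h2; omega
  let e : Fin l ≃ b := (Fintype.equivFinOfCardEq hcard).symm
  choose idx hidx using fun x : b => hb_sub x.2
  refine ⟨⟨fun i => idx (e i), ?_⟩, ?_⟩
  · intro i j hij
    have hx : (e i : Fin l → K) = (e j : Fin l → K) := by
      rw [← hidx (e i), ← hidx (e j)]; exact congrArg B hij
    exact e.injective (Subtype.ext hx)
  · have hrows : LinearIndependent K
        (fun i => (B.submatrix (fun i : Fin l => idx (e i)) id) i) := by
      have h3 : (fun i => (B.submatrix (fun i : Fin l => idx (e i)) id) i)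
          = fun i => ((e i : Fin l → K)) := by
        funext i; funext j; simp [Matrix.submatrix_apply, hidx]
      rw [h3]
      exact hb_li.comp e e.injective
    have h4 := Matrix.linearIndependent_rows_iff_isUnit.mp hrows
    rw [Matrix.isUnit_iff_isUnit_det] at h4
    exact h4.ne_zero

def colEquiv (k l : ℕ) (hkl : l ≤ k) : (Fin l ⊕ Fin (k - l)) ≃ Fin k :=
  finSumFinEquiv.trans (finCongr (by omega))

lemma colEquiv_inl_val (k l : ℕ) (hkl : l ≤ k) (j : Fin l) :
    ((colEquiv k l hkl (Sum.inl j) : Fin k) : ℕ) = (j : ℕ) := by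
  simp [colEquiv]

lemma colEquiv_inr_val (k l : ℕ) (hkl : l ≤ k) (x : Fin (k - l)) :
    ((colEquiv k l hkl (Sum.inr x) : Fin k) : ℕ) = l + (x : ℕ) := by
  simp [colEquiv]

lemma appendCols_inl (k l : ℕ) (hkl : l ≤ k) (A : Matrix (Fin k) (Fin l) ℤ)
    (C : Matrix (Fin k) (Fin (k - l)) ℤ) (s : Fin k) (j : Fin l) :
    appendCols k l A C s (colEquiv k l hkl (Sum.inl j)) = A s j := by
  have hv := colEquiv_inl_val k l hkl j
  have hlt : ((colEquiv k l hkl (Sum.inl j) : Fin k) : ℕ) < l := by omega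
  simp only [appendCols, Matrix.of_apply, dif_pos hlt]
  congr 1

lemma appendCols_inr (k l : ℕ) (hkl : l ≤ k) (A : Matrix (Fin k) (Fin l) ℤ)
    (C : Matrix (Fin k) (Fin (k - l)) ℤ) (s : Fin k) (x : Fin (k - l)) :
    appendCols k l A C s (colEquiv k l hkl (Sum.inr x)) = C s x := by
  have hv := colEquiv_inr_val k l hkl x
  have hlt : ¬ ((colEquiv k l hkl (Sum.inr x) : Fin k) : ℕ) < l := by omega
  simp only [appendCols, Matrix.of_apply, dif_neg hlt]
  congr 1
  apply Fin.ext
  show ((colEquiv k l hkl (Sum.inr x) : Fin k) : ℕ) - l = (x : ℕ)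
  omega

open Matrix

/-- **Lemma on unimodular completion**: for `A ∈ Mat_{k×l}(ℤ)` with `k ≥ l ≥ 1`, there
exists `C ∈ Mat_{k×(k-l)}(ℤ)` with `(A|C)` invertible over `ℤ` if and only if the
greatest common divisor of all `l × l` minors of `A` equals `1`. -/
theorem stmt0 (k l : ℕ) (hl : 1 ≤ l) (hkl : l ≤ k) (A : Matrix (Fin k) (Fin l) ℤ) :
    (∃ C : Matrix (Fin k) (Fin (k - l)) ℤ, IsUnit (appendCols k l A C).det) ↔
      Finset.univ.gcd (fun r : Fin l ↪ Fin k => (A.submatrix r id).det) = 1 := by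
  classical
  constructor
  · rintro ⟨C, hC⟩
    rw [← Finset.normalize_gcd, normalize_eq_one]
    by_contra hu
    obtain ⟨p, hp, hpd⟩ := Nat.exists_prime_and_dvd
      (fun h1 => hu (Int.isUnit_iff_natAbs_eq.mpr h1))
    have hpg : (p : ℤ) ∣ Finset.univ.gcd (fun r : Fin l ↪ Fin k => (A.submatrix r id).det) :=
      dvd_trans (Int.natCast_dvd_natCast.mpr hpd) (Int.natAbs_dvd.mpr dvd_rfl)
    haveI : Fact p.Prime := ⟨hp⟩
    set Ab : Matrix (Fin k) (Fin l) (ZMod p) := A.map (Int.cast) with hAb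
    have hminor0 : ∀ r : Fin l ↪ Fin k, (Ab.submatrix ⇑r id).det = 0 := by
      intro r
      have h1 : (p : ℤ) ∣ (A.submatrix ⇑r id).det :=
        dvd_trans hpg (Finset.gcd_dvd (Finset.mem_univ r))
      have h2 := RingHom.map_det (Int.castRingHom (ZMod p)) (A.submatrix ⇑r id)
      rw [RingHom.mapMatrix_apply] at h2
      simp only [Int.coe_castRingHom] at h2
      have h3 : ((A.submatrix ⇑r id).map (Int.cast : ℤ → ZMod p)).det = 0 := by
        rw [← h2]
        exact (ZMod.intCast_zmod_eq_zero_iff_dvd _ p).mpr h1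
      rw [hAb, Matrix.submatrix_map]
      exact h3
    have hninj : ¬ Function.Injective Ab.mulVec := by
      intro hinj
      obtain ⟨r, hr⟩ := exists_minor_det_ne_zero Ab hinj
      exact hr (hminor0 r)
    rw [Function.not_injective_iff] at hninj
    obtain ⟨x, y, hxy, hne⟩ := hninj
    set v : Fin l → ZMod p := x - y with hv
    have hv0 : Ab *ᵥ v = 0 := by rw [hv, Matrix.mulVec_sub, hxy, sub_self]
    have hvne : v ≠ 0 := sub_ne_zero_of_ne hne
    set w : Fin k → ZMod p := fun t => Sum.elim v 0 ((colEquiv k l hkl).symm t) with hw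
    have hdet0 : ((appendCols k l A C).map (Int.cast : ℤ → ZMod p)).det = 0 := by
      rw [← Matrix.exists_mulVec_eq_zero_iff]
      refine ⟨w, ?_, ?_⟩
      · obtain ⟨j0, hj0⟩ := Function.ne_iff.mp hvne
        intro hw0
        apply hj0
        have h4 := congrFun hw0 (colEquiv k l hkl (Sum.inl j0))
        simpa [hw] using h4
      · funext s
        have h5 : ((appendCols k l A C).map (Int.cast : ℤ → ZMod p) *ᵥ w) s
            = ∑ c : Fin l ⊕ Fin (k - l),
              ((appendCols k l A C).map (Int.cast : ℤ → ZMod p)) s (colEquiv k l hkl c)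
                * w (colEquiv k l hkl c) := by
          rw [Matrix.mulVec, dotProduct, ← Equiv.sum_comp (colEquiv k l hkl)]
        rw [h5, Fintype.sum_sum_type]
        simp only [hw, Equiv.symm_apply_apply, Sum.elim_inl, Sum.elim_inr,
          Matrix.map_apply, appendCols_inl k l hkl, appendCols_inr k l hkl, mul_zero,
          Finset.sum_const_zero, add_zero]
        have h6 := congrFun hv0 s
        simpa [hAb, Matrix.mulVec, dotProduct, Matrix.map_apply] using h6
    have hpdet : (p : ℤ) ∣ (appendCols k l A C).det := by
      rw [← ZMod.intCast_zmod_eq_zero_iff_dvd]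
      have h7 := RingHom.map_det (Int.castRingHom (ZMod p)) (appendCols k l A C)
      rw [RingHom.mapMatrix_apply] at h7
      simp only [Int.coe_castRingHom] at h7
      rw [h7, hdet0]
    have h8 : IsUnit ((p : ℤ)) := isUnit_of_dvd_unit hpdet hC
    rw [Int.isUnit_iff] at h8
    have := hp.two_le
    omega
  · intro hgcd
    have hex : ∃ r₀ : Fin l ↪ Fin k, (A.submatrix ⇑r₀ id).det ≠ 0 := by
      by_contra hall
      push_neg at hall
      have h0 : Finset.univ.gcd (fun r : Fin l ↪ Fin k => (A.submatrix ⇑r id).det) = 0 :=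
        Finset.gcd_eq_zero_iff.mpr (fun r _ => hall r)
      rw [hgcd] at h0
      exact one_ne_zero h0
    obtain ⟨r₀, hr₀⟩ := hex
    have h_inj : Function.Injective (A.mulVecLin) := by
      apply (injective_iff_map_eq_zero A.mulVecLin).mpr
      intro v hv
      by_contra hvne
      have h1 : (A.submatrix ⇑r₀ id) *ᵥ v = 0 := by
        funext i
        have h2 := congrFun hv (r₀ i)
        simpa [Matrix.mulVecLin_apply, Matrix.mulVec, dotProduct] using h2
      exact hr₀ (Matrix.exists_mulVec_eq_zero_iff.mp ⟨v, hvne, h1⟩)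
    set N := LinearMap.range A.mulVecLin with hN
    obtain ⟨n, snf⟩ := Submodule.smithNormalForm (Pi.basisFun ℤ (Fin k)) N
    have hn : n = l := by
      have e1 : (Fin l → ℤ) ≃ₗ[ℤ] N := LinearEquiv.ofInjective A.mulVecLin h_inj
      have b2 : Module.Basis (Fin l) ℤ N := (Pi.basisFun ℤ (Fin l)).map e1
      have e2 := snf.bN.indexEquiv b2
      simpa using Fintype.card_congr e2
    subst n
    have hcol : ∀ j : Fin l, (fun s => A s j) ∈ N := by
      intro j
      exact ⟨Pi.single j 1, by funext s; simp [Matrix.mulVecLin_apply, Matrix.mulVec_single]⟩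
    set U : Matrix (Fin l) (Fin l) ℤ :=
      fun i j => snf.bN.repr ⟨fun s => A s j, hcol j⟩ i with hU
    have KI : ∀ j s, A s j = ∑ i, U i j * (snf.a i * snf.bM (snf.f i) s) := by
      intro j s
      have h1 := snf.bN.sum_repr ⟨fun s => A s j, hcol j⟩
      have h2 := congrArg (Submodule.subtype N) h1
      rw [map_sum] at h2
      have h3 := congrFun h2 s
      rw [Finset.sum_apply] at h3
      have h4 : (∑ c : Fin l,
          N.subtype ((snf.bN.repr ⟨fun s => A s j, hcol j⟩) c • snf.bN c) s) = A s j := h3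
      rw [← h4]
      apply Finset.sum_congr rfl
      intro i _
      simp only [_root_.map_smul, Submodule.subtype_apply, Pi.smul_apply, smul_eq_mul]
      rw [snf.snf i]
      simp only [Pi.smul_apply, smul_eq_mul, hU]
    set P : Matrix (Fin k) (Fin k) ℤ := fun s t => snf.bM t s with hP
    have hPdet : IsUnit P.det := by
      have h1 : P = (Pi.basisFun ℤ (Fin k)).toMatrix ⇑snf.bM := by
        ext s t
        simp [Module.Basis.toMatrix_apply, hP]
      rw [h1, ← Module.Basis.det_apply]
      exact Module.Basis.isUnit_det _ _
    have hfact : ∀ r : Fin l ↪ Fin k, (A.submatrix ⇑r id).det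
        = (P.submatrix ⇑r ⇑snf.f).det * ((∏ i, snf.a i) * U.det) := by
      intro r
      have hmat : A.submatrix ⇑r id = (P.submatrix ⇑r ⇑snf.f * Matrix.diagonal snf.a) * U := by
        ext x j
        rw [Matrix.mul_apply, Matrix.submatrix_apply]
        rw [show (id j : Fin l) = j from rfl, KI j (r x)]
        apply Finset.sum_congr rfl
        intro i _
        simp only [Matrix.mul_diagonal, Matrix.submatrix_apply, hP, Matrix.submatrix, Matrix.of_apply]
        ring
      rw [hmat, Matrix.det_mul, Matrix.det_mul, Matrix.det_diagonal]
      ring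
    have hudvd : ((∏ i, snf.a i) * U.det) ∣
        Finset.univ.gcd (fun r : Fin l ↪ Fin k => (A.submatrix ⇑r id).det) := by
      apply Finset.dvd_gcd
      intro r _
      exact ⟨(P.submatrix ⇑r ⇑snf.f).det, by rw [hfact r]; ring⟩
    rw [hgcd] at hudvd
    have hunit : IsUnit ((∏ i, snf.a i) * U.det) := isUnit_of_dvd_one hudvd
    have hcards : Fintype.card ↥((Set.range ⇑snf.f)ᶜ) = k - l := by
      have h1 : Fintype.card ↥(Set.range ⇑snf.f) = l := by
        rw [Set.card_range_of_injective snf.f.injective]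
        simp
      rw [Fintype.card_compl_set, h1]
      simp
    set e2 : Fin (k - l) ≃ ↥((Set.range ⇑snf.f)ᶜ) := (Fintype.equivFinOfCardEq hcards).symm
      with he2
    have hinj : Function.Injective
        (Sum.elim ⇑snf.f (fun x : Fin (k - l) => ((e2 x : ↥((Set.range ⇑snf.f)ᶜ)) : Fin k))) := by
      intro c d hcd
      cases c with
      | inl i =>
        cases d with
        | inl i' =>
          simp only [Sum.elim_inl] at hcd
          rw [snf.f.injective hcd]
        | inr x =>
          exfalso
          simp only [Sum.elim_inl, Sum.elim_inr] at hcd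
          exact (e2 x).2 ⟨i, hcd⟩
      | inr x =>
        cases d with
        | inl i =>
          exfalso
          simp only [Sum.elim_inl, Sum.elim_inr] at hcd
          exact (e2 x).2 ⟨i, hcd.symm⟩
        | inr y =>
          simp only [Sum.elim_inr] at hcd
          rw [e2.injective (Subtype.ext hcd)]
    have hsurj : Function.Surjective
        (Sum.elim ⇑snf.f (fun x : Fin (k - l) => ((e2 x : ↥((Set.range ⇑snf.f)ᶜ)) : Fin k))) := by
      intro t
      by_cases ht : t ∈ Set.range ⇑snf.f
      · obtain ⟨i, hi⟩ := ht
        exact ⟨Sum.inl i, hi⟩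
      · exact ⟨Sum.inr (e2.symm ⟨t, ht⟩), by simp⟩
    set eS : (Fin l ⊕ Fin (k - l)) ≃ Fin k := Equiv.ofBijective _ ⟨hinj, hsurj⟩ with heS
    have heS_inl : ∀ i, eS (Sum.inl i) = snf.f i := fun i => rfl
    set C : Matrix (Fin k) (Fin (k - l)) ℤ := fun s x => snf.bM (eS (Sum.inr x)) s with hCdef
    set FB : Matrix (Fin l ⊕ Fin (k - l)) (Fin l ⊕ Fin (k - l)) ℤ :=
      Matrix.fromBlocks (Matrix.diagonal snf.a * U) 0 0
        (1 : Matrix (Fin (k - l)) (Fin (k - l)) ℤ) with hFB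
    set W : Matrix (Fin k) (Fin k) ℤ := FB.submatrix ⇑eS.symm ⇑(colEquiv k l hkl).symm with hW
    refine ⟨C, ?_⟩
    have hMPW : appendCols k l A C = P * W := by
      ext s t
      obtain ⟨c, rfl⟩ := (colEquiv k l hkl).surjective t
      rw [Matrix.mul_apply]
      have h9 : (∑ u, P s u * W u ((colEquiv k l hkl) c))
          = ∑ d : Fin l ⊕ Fin (k - l), P s (eS d) * FB d c := by
        rw [← Equiv.sum_comp eS (fun u => P s u * W u ((colEquiv k l hkl) c))]
        apply Finset.sum_congr rfl
        intro d _
        simp [hW, Matrix.submatrix_apply]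
      rw [h9, Fintype.sum_sum_type]
      cases c with
      | inl j =>
        rw [appendCols_inl k l hkl]
        simp only [hFB, Matrix.fromBlocks_apply₁₁, Matrix.fromBlocks_apply₂₁,
          Matrix.zero_apply, mul_zero, Finset.sum_const_zero, add_zero, Matrix.diagonal_mul]
        rw [KI j s]
        apply Finset.sum_congr rfl
        intro i _
        rw [heS_inl i]
        simp only [hP]
        ring
      | inr x =>
        rw [appendCols_inr k l hkl]
        simp only [hFB, Matrix.fromBlocks_apply₁₂, Matrix.fromBlocks_apply₂₂,
          Matrix.zero_apply, mul_zero, Finset.sum_const_zero, zero_add, Matrix.one_apply,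
          mul_ite, mul_one]
        rw [Finset.sum_ite_eq' Finset.univ x (fun y => P s (eS (Sum.inr y)))]
        simp [hCdef, hP]
    rw [hMPW, Matrix.det_mul]
    apply IsUnit.mul hPdet
    rw [hW, aux_isUnit_det_submatrix FB eS.symm (colEquiv k l hkl).symm, hFB,
      Matrix.det_fromBlocks_zero₂₁, Matrix.det_one, mul_one, Matrix.det_mul,
      Matrix.det_diagonal]
    exact hunit
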